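/- Let g ≥ 0, let a ∈ ℂ[λ] be a polynomial of degree 2g with 2g pairwise distinct roots, whose leading coefficient has absolute value 1, which satisfies the reality condition λ^{2g}·conj(a(1/conj(λ))) = a(λ) for all λ ∈ ℂ∖{0}, and for which λ^{−g}·a(λ) is a positive real number for every λ with |λ| = 1. Let α ∈ ℂ with |α| = 1, let t ∈ ℝ with t ≠ 0, and suppose a(α·e^t) ≠ 0 and a(α·e^{−t}) ≠ 0. Define a_t(λ) = (λ − α·e^t)·(conj(α)·λ − e^{−t})·a(λ). Then: a_t has degree 2g+2 and its leading coefficient has absolute value 1; a_t satisfies the reality condition λ^{2g+2}·conj(a_t(1/conj(λ))) = a_t(λ) for all λ ∈ ℂ∖{0}; the 2g+2 roots of a_t are pairwise distinct; and λ^{−(g+1)}·a_t(λ) is a nonzero real number for every λ with |λ| = 1. -/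

import Mathlib

open Polynomial

theorem stmt14 (g : ℕ) (a : Polynomial ℂ)
    (hdeg : a.degree = (2 * g : ℕ)) (hnodup : a.roots.Nodup)
    (hlead : ‖a.leadingCoeff‖ = 1)
    (hreal : ∀ l : ℂ, l ≠ 0 →
      l ^ (2 * g) * (starRingEnd ℂ) (a.eval (((starRingEnd ℂ) l)⁻¹)) = a.eval l)
    (hpos : ∀ l : ℂ, ‖l‖ = 1 → ∃ r : ℝ, 0 < r ∧ a.eval l / l ^ g = (r : ℂ))
    (α : ℂ) (hα : ‖α‖ = 1) (t : ℝ) (ht : t ≠ 0)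
    (hroot1 : a.eval (α * Real.exp t) ≠ 0) (hroot2 : a.eval (α * Real.exp (-t)) ≠ 0) :
    ∀ aₜ : Polynomial ℂ,
      aₜ = (X - C (α * (Real.exp t : ℂ))) *
           (C ((starRingEnd ℂ) α) * X - C ((Real.exp (-t) : ℝ) : ℂ)) * a →
      (aₜ.degree = (2 * g + 2 : ℕ) ∧ ‖aₜ.leadingCoeff‖ = 1) ∧
      (∀ l : ℂ, l ≠ 0 →
        l ^ (2 * g + 2) * (starRingEnd ℂ) (aₜ.eval (((starRingEnd ℂ) l)⁻¹)) = aₜ.eval l) ∧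
      aₜ.roots.Nodup ∧
      (∀ l : ℂ, ‖l‖ = 1 → ∃ r : ℝ, r ≠ 0 ∧ aₜ.eval l / l ^ (g + 1) = (r : ℂ)) := by
  intro aₜ haₜ
  have hane : a ≠ 0 := by
    intro h; rw [h, degree_zero] at hdeg; exact WithBot.bot_ne_coe hdeg
  have hα0 : α ≠ 0 := by
    intro h; rw [h] at hα; simp at hα
  have hc0 : (starRingEnd ℂ) α ≠ 0 := by simpa using hα0
  have hα1 : (starRingEnd ℂ) α * α = 1 := by
    have h1 : α * (starRingEnd ℂ) α = (Complex.normSq α : ℂ) := Complex.mul_conj α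
    have h2 : Complex.normSq α = 1 := by
      rw [← Complex.sq_norm, hα]; norm_num
    rw [mul_comm] at h1
    rw [h1, h2]; norm_num
  have he : ((Real.exp t : ℝ) : ℂ) * ((Real.exp (-t) : ℝ) : ℂ) = 1 := by
    rw [← Complex.ofReal_mul, ← Real.exp_add]; simp
  have hee : ((Real.exp t : ℝ) : ℂ) ≠ ((Real.exp (-t) : ℝ) : ℂ) := by
    rw [Ne, Complex.ofReal_inj, Real.exp_eq_exp]
    intro h; apply ht; linarith
  -- rewrite second factor
  have hfac : C ((starRingEnd ℂ) α) * X - C ((Real.exp (-t) : ℝ) : ℂ)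
      = C ((starRingEnd ℂ) α) * (X - C (α * (Real.exp (-t) : ℝ))) := by
    rw [mul_sub, ← C_mul]
    congr 2
    rw [← mul_assoc, hα1, one_mul]
  constructor
  · constructor
    · rw [haₜ, hfac, degree_mul, degree_mul, degree_C_mul hc0, degree_X_sub_C,
        degree_X_sub_C, hdeg]
      rw [show ((2 * g + 2 : ℕ) : WithBot ℕ) = 1 + 1 + ((2 * g : ℕ) : WithBot ℕ) from by
        rw [show 2 * g + 2 = 1 + 1 + 2 * g from by ring, Nat.cast_add, Nat.cast_add,
          Nat.cast_one]]
    · rw [haₜ, hfac, leadingCoeff_mul, leadingCoeff_mul, leadingCoeff_mul,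
        leadingCoeff_X_sub_C, leadingCoeff_X_sub_C, leadingCoeff_C]
      simp [map_mul, hα, hlead]
  refine ⟨?_, ?_, ?_⟩
  · -- reality
    intro l hl
    have hrl := hreal l hl
    rw [haₜ]
    simp only [eval_mul, eval_sub, eval_C, eval_X, map_mul, map_sub, map_inv₀,
      Complex.conj_conj, Complex.conj_ofReal]
    rw [← hrl]
    have he' : Complex.exp (t : ℂ) * Complex.exp (-(t : ℂ)) = 1 := by
      rw [← Complex.exp_add]; simp
    field_simp
    simp only [one_div]
    linear_combination (l ^ 2 * l ^ (2 * g) * (starRingEnd ℂ) (a.eval (((starRingEnd ℂ) l)⁻¹)) *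
      ((starRingEnd ℂ) α * l ^ 2 - α)) * he
  · -- nodup
    have hroots : aₜ.roots = (α * (Real.exp t : ℝ)) ::ₘ (α * (Real.exp (-t) : ℝ)) ::ₘ a.roots := by
      rw [haₜ, hfac, roots_mul, roots_mul, roots_C_mul _ hc0, roots_X_sub_C, roots_X_sub_C]
      · rw [add_assoc, Multiset.singleton_add, Multiset.singleton_add]
      · exact mul_ne_zero (X_sub_C_ne_zero _) (mul_ne_zero (C_ne_zero.mpr hc0) (X_sub_C_ne_zero _))
      · exact mul_ne_zero (mul_ne_zero (X_sub_C_ne_zero _)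
          (mul_ne_zero (C_ne_zero.mpr hc0) (X_sub_C_ne_zero _))) hane
    rw [hroots]
    refine Multiset.nodup_cons.mpr ⟨?_, Multiset.nodup_cons.mpr ⟨?_, hnodup⟩⟩
    · simp only [Multiset.mem_cons]
      rintro (h | h)
      · exact hee (mul_left_cancel₀ hα0 h)
      · exact hroot1 (isRoot_of_mem_roots h)
    · intro h
      exact hroot2 (isRoot_of_mem_roots h)
  · -- nonzero real on circle
    intro l hl
    have hl0 : l ≠ 0 := by
      intro h; rw [h] at hl; simp at hl
    have hll : (starRingEnd ℂ) l * l = 1 := by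
      have h1 : l * (starRingEnd ℂ) l = (Complex.normSq l : ℂ) := Complex.mul_conj l
      have h2 : Complex.normSq l = 1 := by rw [← Complex.sq_norm, hl]; norm_num
      rw [mul_comm] at h1; rw [h1, h2]; norm_num
    obtain ⟨r, hr, hrc⟩ := hpos l hl
    have ha_eval : a.eval l = (r : ℂ) * l ^ g := by
      rw [div_eq_iff (pow_ne_zero g hl0)] at hrc; exact hrc
    have hlne : l ≠ α * (Real.exp t : ℝ) := by
      intro h
      have : ‖l‖ = Real.exp t := by
        rw [h, norm_mul, hα, one_mul, Complex.norm_real, Real.norm_of_nonneg (Real.exp_pos t).le]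
      rw [hl] at this
      rw [show (1:ℝ) = Real.exp 0 from (Real.exp_zero).symm] at this
      exact ht (Real.exp_eq_exp.mp this).symm
    have hnsq0 : Complex.normSq (l - α * (Real.exp t : ℝ)) ≠ 0 := by
      intro h; exact (sub_ne_zero.mpr hlne) (Complex.normSq_eq_zero.mp h)
    refine ⟨r * (-(Real.exp (-t)) * Complex.normSq (l - α * (Real.exp t : ℝ))), ?_, ?_⟩
    · refine mul_ne_zero (ne_of_gt hr) (mul_ne_zero ?_ hnsq0)
      simp [Real.exp_ne_zero]
    · have hnsq : ((Complex.normSq (l - α * (Real.exp t : ℝ)) : ℝ) : ℂ)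
          = (l - α * (Real.exp t : ℝ)) * ((starRingEnd ℂ) l - (starRingEnd ℂ) α * (Real.exp t : ℝ)) := by
        rw [← Complex.mul_conj, map_sub, map_mul, Complex.conj_ofReal]
      rw [haₜ]
      simp only [eval_mul, eval_sub, eval_C, eval_X]
      rw [div_eq_iff (pow_ne_zero _ hl0), Complex.ofReal_mul, Complex.ofReal_mul,
        Complex.ofReal_neg, hnsq]
      have hp : l ^ (g + 1) = l ^ g * l := by ring
      rw [hp]
      linear_combination ((starRingEnd ℂ) α * l - (Real.exp (-t) : ℝ)) * (l - α * (Real.exp t : ℝ)) * ha_eval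
        + (r : ℂ) * l ^ g * (l - α * (Real.exp t : ℝ)) * (Real.exp (-t) : ℝ) * hll
        - (r : ℂ) * l ^ (g + 1) * (l - α * (Real.exp t : ℝ)) * (starRingEnd ℂ) α * he
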